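/- arXiv:2605.02224 — 10 statements merged into one kernel-verified Lean document; each statement's English description precedes it below -/
import Mathlib

section
/- Let P = (p_1, …, p_n) be a finite sequence of pairwise distinct points in ℝ^d and q a query point whose distances to p_1, …, p_n are pairwise distinct. Fix k < n, let p_{i_1}, …, p_{i_k} with i_1 < i_2 < … < i_k be the k nearest neighbors of q in P (listed by increasing index), and let p_ℓ be the (k+1)-th nearest neighbor of q in P. Then either ℓ < i_1 (i.e., p_ℓ belongs to the prefix P_{1:i_1−1}), or there exists j ∈ {1, …, k} such that p_ℓ is a successor of p_{i_j}, i.e., i_j < ℓ and Cell(p_{i_j}; P_{1:ℓ}) is a proper subset of Cell(p_{i_j}; P_{1:ℓ−1}). -/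
/-!
Walk from `q` towards `z = p_ℓ` along `x_t = q + t (z - q)`. For every earlier site `p_i`
(`i < ℓ`) the quantity `|x_t - p_i|² - |x_t - z|²` is affine in `t`; it is positive at
`t = 1`, and negative at `t = 0` exactly when `p_i` is one of the `k` nearest neighbours.
Just after the last of these lines crosses zero, the lowest line belongs to a nearest
neighbour `p_a` and is positive: `x_t` lies in `Cell(p_a; P_{1:ℓ-1})` but is strictly closer
to `p_ℓ` than to `p_a`, so inserting `p_ℓ` prunes the cell of `p_a`.
-/

open Set

noncomputable section

/-- Euclidean space `ℝ^d`. -/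
abbrev E (d : ℕ) := EuclideanSpace ℝ (Fin d)

/-- The Voronoi cell of `p` with respect to the site set `S`:
all points at least as close to `p` as to every site of `S`. -/
def cell {d : ℕ} (p : E d) (S : Set (E d)) : Set (E d) :=
  {x | ∀ s ∈ S, dist x p ≤ dist x s}

/-- The prefix set `P_{1:m}` consisting of the first `m` points of the
sequence `p` (0-based indices `< m`). -/
def pref {d n : ℕ} (p : Fin n → E d) (m : ℕ) : Set (E d) :=
  p '' {i : Fin n | (i : ℕ) < m}

/-- `p j` is a successor of `p i` (`p j ∈ L i`): `i < j` and the insertion of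
`p j` prunes the Voronoi cell of `p i`, i.e. `Cell(p_i; P_{1:j})` is a proper
subset of `Cell(p_i; P_{1:j-1})` (in 1-based notation). -/
def isSucc {d n : ℕ} (p : Fin n → E d) (i j : Fin n) : Prop :=
  i < j ∧ cell (p i) (pref p ((j : ℕ) + 1)) ⊂ cell (p i) (pref p (j : ℕ))

/-- `p i` is the nearest neighbor `Φ_{1:m}(q)` of `q` in the prefix `P_{1:m}`. -/
def isNearest {d n : ℕ} (p : Fin n → E d) (q : E d) (m : ℕ) (i : Fin n) : Prop :=
  (i : ℕ) < m ∧ ∀ j : Fin n, (j : ℕ) < m → dist q (p i) ≤ dist q (p j)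

open Filter Topology
open scoped RealInnerProductSpace

lemma affine_eq_mul_sub_root {c e : ℝ} (h : c ≠ e) (t : ℝ) :
    (1 - t) * c + t * e = (e - c) * (t - c / (c - e)) := by
  have : c - e ≠ 0 := sub_ne_zero.mpr h
  field_simp
  ring

lemma exists_lowest_line_pos {ι : Type*} (s : Finset ι) (c e : ι → ℝ)
    (he : ∀ i ∈ s, 0 < e i) (hneg : ∃ i ∈ s, c i < 0) :
    ∃ t : ℝ, ∃ a ∈ s, c a < 0 ∧ 0 < (1 - t) * c a + t * e a ∧
      ∀ i ∈ s, (1 - t) * c a + t * e a ≤ (1 - t) * c i + t * e i := by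
  set f : ι → ℝ → ℝ := fun i t => (1 - t) * c i + t * e i
  set A := s.filter fun i => c i < 0
  have hA : A.Nonempty := by simpa [A, Finset.filter_nonempty_iff] using hneg
  have hmemA : ∀ {a}, a ∈ A → a ∈ s ∧ c a < 0 := Finset.mem_filter.mp
  set r : ι → ℝ := fun i => c i / (c i - e i)
  have hslope : ∀ a ∈ A, 0 < e a - c a := fun a ha => by
    linarith [(hmemA ha).2, he a (hmemA ha).1]
  have hf : ∀ a ∈ A, ∀ t, f a t = (e a - c a) * (t - r a) := fun a ha =>
    affine_eq_mul_sub_root (by linarith [hslope a ha])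
  -- `t₀` is the last zero crossing among the lines that start negative
  obtain ⟨a₀, ha₀, hr₀⟩ := A.exists_max_image r hA
  set t₀ := r a₀
  have ht₀ : 0 < t₀ := div_pos_of_neg_of_neg (hmemA ha₀).2 (by linarith [hslope a₀ ha₀])
  have ht₀' : t₀ < 1 := by
    have : 0 < (e a₀ - c a₀) * (1 - t₀) := by
      rw [← hf a₀ ha₀ 1]
      simpa [f] using he a₀ (hmemA ha₀).1
    nlinarith [hslope a₀ ha₀]
  have hf₀ : f a₀ t₀ = 0 := by rw [hf a₀ ha₀, sub_self, mul_zero]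
  have hpos_off : ∀ i ∈ s, i ∉ A → 0 < f i t₀ := fun i hi hiA => by
    have : 0 ≤ c i := not_lt.mp fun h => hiA (Finset.mem_filter.mpr ⟨hi, h⟩)
    have := he i hi
    simp only [f]
    nlinarith
  have hev : ∀ᶠ t in 𝓝[>] t₀, ∀ i ∈ s, i ∉ A → f a₀ t < f i t := by
    refine (eventually_all_finset s).mpr fun i hi => ?_
    by_cases hiA : i ∈ A
    · exact Eventually.of_forall fun _ h => absurd hiA h
    refine eventually_nhdsWithin_of_eventually_nhds
      ((ContinuousAt.eventually_lt ?_ ?_ ?_).mono fun _ h _ => h)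
    · fun_prop
    · fun_prop
    · rw [hf₀]; exact hpos_off i hi hiA
  obtain ⟨t, htB, ht⟩ := (hev.and self_mem_nhdsWithin).exists
  obtain ⟨a, ha, hmin⟩ := A.exists_min_image (f · t) hA
  refine ⟨t, a, (hmemA ha).1, (hmemA ha).2, ?_, fun i hi => ?_⟩
  · change 0 < f a t
    rw [hf a ha]
    exact mul_pos (hslope a ha) (by linarith [hr₀ a ha, ht])
  · by_cases hiA : i ∈ A
    · exact hmin i hiA
    · exact (hmin a₀ ha₀).trans (htB i hi hiA).le

lemma dist_sq_sub_dist_sq_lineMap {V : Type*} [NormedAddCommGroup V] [InnerProductSpace ℝ V]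
    (q z s : V) (t : ℝ) :
    dist (AffineMap.lineMap q z t) s ^ 2 - dist (AffineMap.lineMap q z t) z ^ 2
      = (1 - t) * (dist q s ^ 2 - dist q z ^ 2) + t * dist z s ^ 2 := by
  have h : ∀ a b : V, dist a b ^ 2 = ‖a‖ ^ 2 - 2 * ⟪a, b⟫ + ‖b‖ ^ 2 := fun a b => by
    rw [dist_eq_norm, norm_sub_sq_real]
  simp only [AffineMap.lineMap_apply_module', h, inner_add_left, inner_sub_left,
    real_inner_smul_left, real_inner_self_eq_norm_sq]
  ring

section Voronoi

variable {d n : ℕ} {p : Fin n → E d}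

lemma mem_cell_pref_iff {c x : E d} {m : ℕ} :
    x ∈ cell c (pref p m) ↔ ∀ i : Fin n, (i : ℕ) < m → dist x c ≤ dist x (p i) := by
  simp [cell, pref]

lemma cell_pref_succ_subset (c : E d) (m : ℕ) :
    cell c (pref p (m + 1)) ⊆ cell c (pref p m) := fun _ hx s hs =>
  hx s (image_mono (fun _ hi => Nat.lt_succ_of_lt hi) hs)

lemma isSucc_of_dist_lt {i j : Fin n} (hij : i < j) {x : E d}
    (hx : x ∈ cell (p i) (pref p j)) (hxj : dist x (p j) < dist x (p i)) : isSucc p i j :=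
  ⟨hij, (ssubset_iff_of_subset (cell_pref_succ_subset _ _)).mpr
    ⟨x, hx, fun h => (h (p j) ⟨j, Nat.lt_succ_self _, rfl⟩).not_gt hxj⟩⟩

end Voronoi

theorem stmt0_general
    {d n k : ℕ} (hk0 : 0 < k)
    (p : Fin n → E d) (hp : Function.Injective p)
    (q : E d)
    (ι : Fin k → Fin n)
    (hknn : ∀ a b : Fin n, (∃ j, ι j = a) → (¬ ∃ j, ι j = b) →
      dist q (p a) < dist q (p b))
    (ℓ : Fin n) (hℓ : ¬ ∃ j, ι j = ℓ)
    (hℓnear : ∀ b : Fin n, (¬ ∃ j, ι j = b) → dist q (p ℓ) ≤ dist q (p b)) :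
    ℓ < ι ⟨0, hk0⟩ ∨ ∃ j : Fin k, isSucc p (ι j) ℓ := by
  refine (lt_or_ge ℓ (ι ⟨0, hk0⟩)).imp id fun h₀ => ?_
  have hι₀ : ι ⟨0, hk0⟩ < ℓ := h₀.lt_of_ne fun h => hℓ ⟨_, h⟩
  set z := p ℓ
  obtain ⟨t, a, ha, hca, hpos, hmin⟩ := exists_lowest_line_pos (Finset.univ.filter (· < ℓ))
    (fun i => dist q (p i) ^ 2 - dist q z ^ 2) (fun i => dist z (p i) ^ 2)
    (fun i hi => pow_pos (dist_pos.mpr (hp.ne (Finset.mem_filter.mp hi).2.ne')) 2)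
    ⟨ι ⟨0, hk0⟩, by simp [hι₀], sub_neg.mpr <|
      (sq_lt_sq₀ dist_nonneg dist_nonneg).mpr (hknn _ ℓ ⟨_, rfl⟩ hℓ)⟩
  obtain ⟨j, rfl⟩ : ∃ j, ι j = a := by
    by_contra hna
    exact hca.not_ge (sub_nonneg.mpr (pow_le_pow_left₀ dist_nonneg (hℓnear a hna) 2))
  set x := AffineMap.lineMap q z t
  have hx (s : E d) := dist_sq_sub_dist_sq_lineMap q z s t
  refine ⟨j, isSucc_of_dist_lt (Finset.mem_filter.mp ha).2 (x := x) ?_ ?_⟩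
  · refine mem_cell_pref_iff.mpr fun i hi => ?_
    have := hmin i (by simpa using hi)
    rw [← hx, ← hx, sub_le_sub_iff_right] at this
    exact (sq_le_sq₀ dist_nonneg dist_nonneg).mp this
  · rw [← hx, sub_pos] at hpos
    exact (sq_lt_sq₀ dist_nonneg dist_nonneg).mp hpos

/-- the (k+1)-th nearest neighbor of `q` either precedes all of
the `k` nearest neighbors in insertion order, or is a successor of one of them. -/
theorem stmt0
    {d n k : ℕ} (hd : 1 ≤ d) (hk : k < n) (hk0 : 0 < k)
    (p : Fin n → E d) (hp : Function.Injective p)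
    (q : E d) (hq : Function.Injective fun i => dist q (p i))
    (ι : Fin k → Fin n) (hmono : StrictMono ι)
    (hknn : ∀ a b : Fin n, (∃ j, ι j = a) → (¬ ∃ j, ι j = b) →
      dist q (p a) < dist q (p b))
    (ℓ : Fin n) (hℓ : ¬ ∃ j, ι j = ℓ)
    (hℓnear : ∀ b : Fin n, (¬ ∃ j, ι j = b) → dist q (p ℓ) ≤ dist q (p b)) :
    ℓ < ι ⟨0, hk0⟩ ∨ ∃ j : Fin k, isSucc p (ι j) ℓ :=
  stmt0_general hk0 p hp q ι hknn ℓ hℓ hℓnear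
end
end

section
/- Let P = (p_1, …, p_n) be a finite sequence of pairwise distinct points in ℝ^d and q a query point whose distances to p_1, …, p_n are pairwise distinct. Fix m ≤ n and k < m, let p_{i_1}, …, p_{i_k} with i_1 < i_2 < … < i_k ≤ m be the k nearest neighbors of q in the prefix P_{1:m}, and let p_ℓ (ℓ ≤ m) be the (k+1)-th nearest neighbor of q in P_{1:m}. Then either ℓ < i_1, or there exists j ∈ {1, …, k} such that i_j < ℓ and Cell(p_{i_j}; P_{1:ℓ}) is a proper subset of Cell(p_{i_j}; P_{1:ℓ−1}); i.e., p_ℓ is a successor of p_{i_j} with respect to the full sequence P. Hence k-NN queries restricted to any prefix P_{1:m} are answered by the successor lists of the full sequence restricted to indices at most m, with no recomputation. -/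
/-! Move a point `y` along the segment from `q` to `w = p_ℓ`. For an earlier site `s`, the excess
`|y - s|² - |y - w|²` is affine in the position of `y`. It stays positive for the sites farther
from `q` than `w`, and it increases from negative to positive for the nearer ones, which by the
nearest-neighbour hypotheses are among the `p_{i_j}`. Just after the last of these excesses turns
positive, `y` lies in the Voronoi cell, within `P_{1:ℓ-1}`, of one of the `p_{i_j}` while being
closer to `w`, so inserting `w` prunes that cell. -/

open Set

noncomputable section

section SqDistExcess

variable {V : Type*} [NormedAddCommGroup V] [InnerProductSpace ℝ V]

def sqDistExcess (q w s : V) (t : ℝ) : ℝ :=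
  dist (AffineMap.lineMap q w t) s ^ 2 - dist (AffineMap.lineMap q w t) w ^ 2

lemma sqDistExcess_eq (q w s : V) (t : ℝ) :
    sqDistExcess q w s t = (1 - t) * (dist q s ^ 2 - dist q w ^ 2) + t * dist w s ^ 2 := by
  have h : ∀ a b : V, dist a b ^ 2 = inner ℝ (a - b) (a - b) := fun a b => by
    rw [dist_eq_norm, ← real_inner_self_eq_norm_sq]
  simp only [sqDistExcess, AffineMap.lineMap_apply_module, h, inner_sub_left, inner_sub_right,
    inner_add_left, inner_add_right, real_inner_smul_left, real_inner_smul_right]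
  rw [real_inner_comm w q, real_inner_comm s q, real_inner_comm s w]
  ring

lemma continuous_sqDistExcess (q w s : V) : Continuous (sqDistExcess q w s) := by
  unfold sqDistExcess
  fun_prop

lemma strictMono_sqDistExcess {q w s : V} (h : dist q s < dist q w) :
    StrictMono (sqDistExcess q w s) := by
  intro t₁ t₂ ht
  simp only [sqDistExcess_eq]
  have : dist q s ^ 2 < dist q w ^ 2 := by gcongr
  nlinarith [sq_nonneg (dist w s)]

lemma sqDistExcess_pos {q w s : V} (h : dist q w < dist q s) {t : ℝ} (ht : t ∈ Icc 0 1) :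
    0 < sqDistExcess q w s t := by
  have hws : 0 < dist w s := dist_pos.2 fun hws => h.ne (by rw [hws])
  have : dist q w ^ 2 < dist q s ^ 2 := by gcongr
  rw [sqDistExcess_eq]
  rcases ht with ⟨ht0, ht1⟩
  rcases ht1.lt_or_eq with ht1 | rfl
  · nlinarith [sq_nonneg (dist w s)]
  · simpa using pow_pos hws 2

lemma exists_sqDistExcess_pos_le (S : Finset V) {q w : V}
    (hS : ∀ s ∈ S, dist q s ≠ dist q w) (hnear : ∃ a ∈ S, dist q a < dist q w) :
    ∃ a ∈ S, dist q a < dist q w ∧ ∃ t, 0 < sqDistExcess q w a t ∧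
      ∀ s ∈ S, sqDistExcess q w a t ≤ sqDistExcess q w s t := by
  set K := S.filter (fun s => dist q s < dist q w)
  have hK : K.Nonempty := by
    obtain ⟨a, haS, ha⟩ := hnear
    exact ⟨a, Finset.mem_filter.2 ⟨haS, ha⟩⟩
  -- Lower envelope of the near sites' excesses: strictly increasing, with a zero `t₀ ∈ (0, 1)`
  -- where the far sites' excesses are still positive, so just after `t₀` it is the envelope of all.
  set G : ℝ → ℝ := fun t => K.inf' hK (sqDistExcess q w · t)
  have hG_mono : StrictMono G := by
    intro t₁ t₂ ht
    obtain ⟨a, haK, ha⟩ := K.exists_mem_eq_inf' hK (sqDistExcess q w · t₂)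
    calc G t₁ ≤ sqDistExcess q w a t₁ := K.inf'_le _ haK
      _ < sqDistExcess q w a t₂ := strictMono_sqDistExcess (Finset.mem_filter.1 haK).2 ht
      _ = G t₂ := ha.symm
  have hG_cont : Continuous G :=
    Continuous.finset_inf'_apply hK fun s _ => continuous_sqDistExcess q w s
  have hG0 : G 0 < 0 := by
    obtain ⟨a, haK⟩ := hK
    have ha := (Finset.mem_filter.1 haK).2
    have : dist q a ^ 2 < dist q w ^ 2 := by gcongr
    calc G 0 ≤ sqDistExcess q w a 0 := K.inf'_le _ haK
      _ < 0 := by rw [sqDistExcess_eq]; linarith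
  have hG1 : 0 < G 1 := by
    obtain ⟨a, haK, ha⟩ := K.exists_mem_eq_inf' hK (sqDistExcess q w · 1)
    have haw : w ≠ a := fun h => (Finset.mem_filter.1 haK).2.ne (by rw [h])
    change G 1 = _ at ha
    rw [ha, sqDistExcess_eq]
    simpa using pow_pos (dist_pos.2 haw) 2
  obtain ⟨t₀, ⟨ht₀0, ht₀1⟩, hGt₀⟩ :=
    intermediate_value_Ioo zero_le_one hG_cont.continuousOn ⟨hG0, hG1⟩
  have hfar : ∀ s ∈ S, ∀ᶠ t in nhds t₀, G t ≤ sqDistExcess q w s t := by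
    intro s hs
    by_cases hsK : s ∈ K
    · exact Filter.Eventually.of_forall fun t => K.inf'_le _ hsK
    · have hlt : dist q w < dist q s :=
        (not_lt.1 fun h => hsK (Finset.mem_filter.2 ⟨hs, h⟩)).lt_of_ne' (hS s hs)
      have : G t₀ < sqDistExcess q w s t₀ :=
        hGt₀ ▸ sqDistExcess_pos hlt ⟨ht₀0.le, ht₀1.le⟩
      exact (hG_cont.continuousAt.eventually_lt
        (continuous_sqDistExcess q w s).continuousAt this).mono fun t => le_of_lt
  obtain ⟨t, hGt, ht₀t⟩ := (((Filter.eventually_all_finset S).2 hfar).filter_mono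
    nhdsWithin_le_nhds |>.and self_mem_nhdsWithin).exists (f := nhdsWithin t₀ (Ioi t₀))
  obtain ⟨a, haK, ha⟩ := K.exists_mem_eq_inf' hK (sqDistExcess q w · t)
  change G t = _ at ha
  refine ⟨a, (Finset.mem_filter.1 haK).1, (Finset.mem_filter.1 haK).2, t, ?_, fun s hs => ?_⟩
  · rw [← ha]
    exact hGt₀ ▸ hG_mono ht₀t
  · rw [← ha]
    exact hGt s hs

lemma exists_near_site_cell_pruned (S : Finset V) {q w : V}
    (hS : ∀ s ∈ S, dist q s ≠ dist q w) (hnear : ∃ a ∈ S, dist q a < dist q w) :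
    ∃ a ∈ S, dist q a < dist q w ∧
      ∃ y, (∀ s ∈ S, dist y a ≤ dist y s) ∧ dist y w < dist y a := by
  obtain ⟨a, haS, haq, t, hpos, hle⟩ := exists_sqDistExcess_pos_le S hS hnear
  refine ⟨a, haS, haq, AffineMap.lineMap q w t, fun s hs => ?_, ?_⟩
  · have := hle s hs
    unfold sqDistExcess at this
    exact (pow_le_pow_iff_left₀ dist_nonneg dist_nonneg two_ne_zero).1 (by linarith)
  · unfold sqDistExcess at hpos
    exact (pow_lt_pow_iff_left₀ dist_nonneg dist_nonneg two_ne_zero).1 (by linarith)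

end SqDistExcess

lemma cell_anti {d : ℕ} (x : E d) {S T : Set (E d)} (hST : S ⊆ T) : cell x T ⊆ cell x S :=
  fun _ hy s hs => hy s (hST hs)

lemma pref_mono {d n : ℕ} (p : Fin n → E d) {m m' : ℕ} (h : m ≤ m') : pref p m ⊆ pref p m' :=
  image_mono fun _ hi => lt_of_lt_of_le hi h

lemma mem_pref_succ {d n : ℕ} (p : Fin n → E d) (i : Fin n) : p i ∈ pref p ((i : ℕ) + 1) :=
  mem_image_of_mem p (Nat.lt_succ_self _)

lemma pref_eq_coe_image {d n : ℕ} (p : Fin n → E d) (m : ℕ) :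
    pref p m = ↑((Finset.univ.filter fun i : Fin n => (i : ℕ) < m).image p) := by
  ext; simp [pref]

lemma isSucc_of_mem_cell_of_dist_lt {d n : ℕ} (p : Fin n → E d) {i j : Fin n} (hij : i < j)
    {y : E d} (hy : y ∈ cell (p i) (pref p j)) (hyj : dist y (p j) < dist y (p i)) :
    isSucc p i j :=
  ⟨hij, ssubset_of_subset_not_subset (cell_anti _ (pref_mono p (Nat.le_succ _)))
    fun hsub => (hsub hy (p j) (mem_pref_succ p j)).not_gt hyj⟩

theorem exists_isSucc_of_dist_lt {d n : ℕ} (p : Fin n → E d) {q : E d}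
    (hq : Function.Injective fun i => dist q (p i)) {a ℓ : Fin n} (haℓ : a < ℓ)
    (ha : dist q (p a) < dist q (p ℓ)) :
    ∃ i < ℓ, dist q (p i) < dist q (p ℓ) ∧ isSucc p i ℓ := by
  obtain ⟨_, hs, hsq, y, hy, hyℓ⟩ := exists_near_site_cell_pruned
    ((Finset.univ.filter fun i : Fin n => (i : ℕ) < ℓ).image p) (q := q) (w := p ℓ)
    (by
      simp only [Finset.mem_image, Finset.mem_filter, Finset.mem_univ, true_and]
      rintro _ ⟨i, hi, rfl⟩ h
      exact Fin.ne_of_lt hi (hq h))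
    ⟨p a, Finset.mem_image_of_mem p (by simpa using haℓ), ha⟩
  obtain ⟨i, hi, rfl⟩ := Finset.mem_image.1 hs
  have hiℓ : i < ℓ := (Finset.mem_filter.1 hi).2
  refine ⟨i, hiℓ, hsq, isSucc_of_mem_cell_of_dist_lt p hiℓ ?_ hyℓ⟩
  rw [pref_eq_coe_image]
  exact hy

theorem stmt1_general
    {d n m k : ℕ} (hk0 : 0 < k)
    (p : Fin n → E d)
    (q : E d) (hq : Function.Injective fun i => dist q (p i))
    (ι : Fin k → Fin n)
    (hιm : ∀ j, (ι j : ℕ) < m)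
    (hknn : ∀ a b : Fin n, (a : ℕ) < m → (b : ℕ) < m →
      (∃ j, ι j = a) → (¬ ∃ j, ι j = b) → dist q (p a) < dist q (p b))
    (ℓ : Fin n) (hℓm : (ℓ : ℕ) < m) (hℓ : ¬ ∃ j, ι j = ℓ)
    (hℓnear : ∀ b : Fin n, (b : ℕ) < m → (¬ ∃ j, ι j = b) →
      dist q (p ℓ) ≤ dist q (p b)) :
    ℓ < ι ⟨0, hk0⟩ ∨ ∃ j : Fin k, isSucc p (ι j) ℓ := by
  refine (lt_or_ge ℓ (ι ⟨0, hk0⟩)).imp id fun hge => ?_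
  have hfirst : ι ⟨0, hk0⟩ < ℓ := hge.lt_of_ne fun h => hℓ ⟨_, h⟩
  obtain ⟨i, hiℓ, hiq, hsucc⟩ := exists_isSucc_of_dist_lt p hq hfirst
    (hknn _ ℓ (hιm _) hℓm ⟨_, rfl⟩ hℓ)
  by_cases hi : ∃ j, ι j = i
  · obtain ⟨j, rfl⟩ := hi
    exact ⟨j, hsucc⟩
  · exact absurd hiq (hℓnear i (lt_trans hiℓ hℓm) hi).not_gt

/-- prefix version of Theorem 0: for the `k` nearest neighbors
of `q` within the prefix `P_{1:m}`, the (k+1)-th nearest neighbor in `P_{1:m}`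
either precedes all of them, or is a successor (w.r.t. the full sequence) of
one of them. -/
theorem stmt1
    {d n m k : ℕ} (hd : 1 ≤ d) (hm : m ≤ n) (hk : k < m) (hk0 : 0 < k)
    (p : Fin n → E d) (hp : Function.Injective p)
    (q : E d) (hq : Function.Injective fun i => dist q (p i))
    (ι : Fin k → Fin n) (hmono : StrictMono ι)
    (hιm : ∀ j, (ι j : ℕ) < m)
    (hknn : ∀ a b : Fin n, (a : ℕ) < m → (b : ℕ) < m →
      (∃ j, ι j = a) → (¬ ∃ j, ι j = b) → dist q (p a) < dist q (p b))
    (ℓ : Fin n) (hℓm : (ℓ : ℕ) < m) (hℓ : ¬ ∃ j, ι j = ℓ)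
    (hℓnear : ∀ b : Fin n, (b : ℕ) < m → (¬ ∃ j, ι j = b) →
      dist q (p ℓ) ≤ dist q (p b)) :
    ℓ < ι ⟨0, hk0⟩ ∨ ∃ j : Fin k, isSucc p (ι j) ℓ :=
  stmt1_general hk0 p q hq ι hιm hknn ℓ hℓm hℓ hℓnear
end
end

section
/- Let P = (p_1, …, p_n) be a finite sequence of pairwise distinct points in ℝ^d and q a query point whose distances to p_1, …, p_n are pairwise distinct. Fix k < n, let p_{i_1}, …, p_{i_k} with i_1 < i_2 < … < i_k be the k nearest neighbors of q in P, and let p_ℓ be the (k+1)-th nearest neighbor of q in P. If i_1 > 1 and ℓ < i_1, then p_ℓ = Φ_{1:i_1−1}(q) (p_ℓ is the nearest neighbor of q within the prefix P_{1:i_1−1}), and moreover p_ℓ = Φ_{1:ℓ}(q) (p_ℓ was the nearest neighbor of q at its own insertion time, i.e., p_ℓ is a transition site). -/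
open Set

noncomputable section

/-- if the (k+1)-th nearest neighbor `p_ℓ` of `q` precedes all
the `k` nearest neighbors (ℓ < i₁, with i₁ > 1), then `p_ℓ = Φ_{1:i₁-1}(q)`
and `p_ℓ = Φ_{1:ℓ}(q)` (it is a transition site). -/
theorem stmt4
    {d n k : ℕ} (hd : 1 ≤ d) (hk : k < n) (hk0 : 0 < k)
    (p : Fin n → E d) (hp : Function.Injective p)
    (q : E d) (hq : Function.Injective fun i => dist q (p i))
    (ι : Fin k → Fin n) (hmono : StrictMono ι)
    (hknn : ∀ a b : Fin n, (∃ j, ι j = a) → (¬ ∃ j, ι j = b) →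
      dist q (p a) < dist q (p b))
    (ℓ : Fin n) (hℓ : ¬ ∃ j, ι j = ℓ)
    (hℓnear : ∀ b : Fin n, (¬ ∃ j, ι j = b) → dist q (p ℓ) ≤ dist q (p b))
    (hi1 : 0 < (ι ⟨0, hk0⟩ : ℕ)) (hlt : ℓ < ι ⟨0, hk0⟩) :
    isNearest p q (ι ⟨0, hk0⟩ : ℕ) ℓ ∧ isNearest p q ((ℓ : ℕ) + 1) ℓ := by
  have hnot : ∀ j : Fin n, (j : ℕ) < (ι ⟨0, hk0⟩ : ℕ) → ¬ ∃ j', ι j' = j := by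
    rintro j hj ⟨j', rfl⟩
    exact absurd hj (not_lt.2 (Nat.cast_le.2 ((hmono.monotone (Fin.le_def.2 (Nat.zero_le _))))))
  constructor
  · exact ⟨hlt, fun j hj => hℓnear j (hnot j hj)⟩
  · exact ⟨Nat.lt_succ_self _, fun j hj =>
      hℓnear j (hnot j (lt_of_lt_of_le hj hlt))⟩
end
end

section
/- Let P = (p_1, …, p_n) be a finite sequence of pairwise distinct points in ℝ^d and q a query point whose distances to p_1, …, p_n are pairwise distinct. Suppose 1 ≤ i < j ≤ n, p_i = Φ_{1:j−1}(q), and dist(q, p_j) < dist(q, p_i). Then Cell(p_i; P_{1:j}) is a proper subset of Cell(p_i; P_{1:j−1}); i.e., the insertion of p_j prunes the Voronoi cell of p_i, so p_j is a successor of p_i. -/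
open Set

noncomputable section

/-- if `p_i = Φ_{1:j-1}(q)` and `p_j` is strictly closer to `q`
than `p_i`, then the insertion of `p_j` prunes the Voronoi cell of `p_i`,
i.e. `p_j` is a successor of `p_i`. -/
theorem stmt5
    {d n : ℕ} (hd : 1 ≤ d)
    (p : Fin n → E d) (hp : Function.Injective p)
    (q : E d) (hq : Function.Injective fun i => dist q (p i))
    (i j : Fin n) (hij : i < j)
    (hnn : isNearest p q (j : ℕ) i)
    (hcloser : dist q (p j) < dist q (p i)) :
    isSucc p i j := by
  refine ⟨hij, ?_⟩
  rw [Set.ssubset_iff_subset_ne]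
  constructor
  · intro x hx s hs
    rcases hs with ⟨k, hk, rfl⟩
    exact hx (p k) ⟨k, Nat.lt_succ_of_lt hk, rfl⟩
  · intro h
    have hqmem : q ∈ cell (p i) (pref p (j : ℕ)) := by
      intro s hs
      rcases hs with ⟨k, hk, rfl⟩
      exact hnn.2 k hk
    rw [← h] at hqmem
    have := hqmem (p j) ⟨j, Nat.lt_succ_self _, rfl⟩
    exact absurd this (not_le.mpr hcloser)
end
end

section
/- Let P = (p_1, …, p_n) be a finite sequence of pairwise distinct points in ℝ^d and q a query point whose distances to p_1, …, p_n are pairwise distinct. Suppose 1 ≤ i ≤ n, p_i = Φ_{1:i}(q), but p_i ≠ Φ_{1:n}(q). Then there exists j with i < j ≤ n such that p_j is a successor of p_i (i.e., Cell(p_i; P_{1:j}) is a proper subset of Cell(p_i; P_{1:j−1})) and dist(q, p_j) < dist(q, p_i). Consequently, the successor-list traversal that starts at p_1 and repeatedly jumps to a strictly closer successor terminates at the global nearest neighbor Φ_{1:n}(q). -/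
open Set

noncomputable section

/-- if `p_i = Φ_{1:i}(q)` but `p_i ≠ Φ_{1:n}(q)`, then some
successor `p_j` of `p_i` is strictly closer to `q` than `p_i`. -/
theorem stmt6
    {d n : ℕ} (hd : 1 ≤ d)
    (p : Fin n → E d) (hp : Function.Injective p)
    (q : E d) (hq : Function.Injective fun i => dist q (p i))
    (i : Fin n)
    (h1 : isNearest p q ((i : ℕ) + 1) i)
    (h2 : ¬ isNearest p q n i) :
    ∃ j : Fin n, isSucc p i j ∧ dist q (p j) < dist q (p i) := by
  classical
  have hn : (i : ℕ) < n := i.isLt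
  have hex : ∃ j : Fin n, dist q (p j) < dist q (p i) := by
    by_contra h
    push_neg at h
    exact h2 ⟨hn, fun j _ => h j⟩
  obtain ⟨j0, hj0⟩ := hex
  let S : Finset (Fin n) := Finset.univ.filter (fun j => dist q (p j) < dist q (p i))
  have hS : S.Nonempty := ⟨j0, by simp [S, hj0]⟩
  obtain ⟨j, hjS, hjmin⟩ := S.exists_min_image id hS
  have hjlt : dist q (p j) < dist q (p i) := by
    simpa [S] using hjS
  have hjmin' : ∀ k : Fin n, dist q (p k) < dist q (p i) → j ≤ k := by
    intro k hk
    exact hjmin k (by simp [S, hk])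
  have hij : i < j := by
    by_contra h
    push_neg at h
    have hji : (j : ℕ) < (i : ℕ) + 1 := by
      have := Fin.le_def.mp h; omega
    have := h1.2 j hji
    linarith
  have hsub : cell (p i) (pref p ((j : ℕ) + 1)) ⊆ cell (p i) (pref p (j : ℕ)) := by
    intro x hx s hs
    apply hx
    obtain ⟨k, hk, rfl⟩ := hs
    exact ⟨k, by simpa using Nat.lt_succ_of_lt hk, rfl⟩
  have hqin : q ∈ cell (p i) (pref p (j : ℕ)) := by
    rintro s ⟨k, hk, rfl⟩
    by_contra hlt
    push_neg at hlt
    have h' := Fin.le_def.mp (hjmin' k hlt)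
    simp only [Set.mem_setOf_eq] at hk
    omega
  have hqnot : q ∉ cell (p i) (pref p ((j : ℕ) + 1)) := by
    intro hq'
    have := hq' (p j) ⟨j, by simp, rfl⟩
    linarith
  refine ⟨j, ⟨hij, ?_⟩, hjlt⟩
  rw [Set.ssubset_iff_of_subset hsub]
  exact ⟨q, hqin, hqnot⟩
end
end

section
/- Let S be a finite set of pairwise distinct points in ℝ^d, p_i ∈ S, and let c ∈ ℝ^d satisfy dist(c, p_i) < dist(c, s) for all s ∈ S \ {p_i} (c lies strictly inside Cell(p_i; S)). Let p_j ∈ S \ {p_i} be a second-nearest point of S to c, i.e., dist(c, p_j) ≤ dist(c, s) for all s ∈ S \ {p_i, p_j}. Then there exists a point x on the line segment from c to p_j with dist(x, p_i) = dist(x, p_j) ≤ dist(x, s) for all s ∈ S; in particular Cell(p_i; S) ∩ Cell(p_j; S) ≠ ∅, i.e., the second-nearest neighbor p_j is a Voronoi neighbor of p_i in S. -/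
open Set

noncomputable section

/-- for a point `c` strictly inside `Cell(p_i; S)`, the
second-nearest site `p_j` of `S` to `c` is a Voronoi neighbor of `p_i`:
some point `x` of the segment `[c, p_j]` is equidistant from `p_i` and `p_j`
and at least as close to them as to every site of `S`. -/
theorem stmt7
    {d : ℕ} (hd : 1 ≤ d) (S : Set (E d)) (hS : S.Finite)
    (pi : E d) (hpi : pi ∈ S) (c : E d)
    (hc : ∀ s ∈ S, s ≠ pi → dist c pi < dist c s)
    (pj : E d) (hpj : pj ∈ S) (hne : pj ≠ pi)
    (hsecond : ∀ s ∈ S, s ≠ pi → s ≠ pj → dist c pj ≤ dist c s) :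
    (∃ x ∈ segment ℝ c pj, dist x pi = dist x pj ∧
      ∀ s ∈ S, dist x pj ≤ dist x s) ∧
    (cell pi S ∩ cell pj S).Nonempty := by

  have hlt : dist c pi < dist c pj := hc pj hpj hne
  set f : ℝ → E d := fun t => (1 - t) • c + t • pj with hf
  have hcont : ContinuousOn (fun t : ℝ => dist (f t) pi - dist (f t) pj)
      (Set.Icc (0:ℝ) 1) := by
    apply Continuous.continuousOn
    fun_prop
  have h0 : f 0 = c := by simp [hf]
  have h1 : f 1 = pj := by simp [hf]
  have hiv := intermediate_value_Icc (by norm_num : (0:ℝ) ≤ 1) hcont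
  have h0mem : (0:ℝ) ∈ Set.Icc (dist (f 0) pi - dist (f 0) pj)
      (dist (f 1) pi - dist (f 1) pj) := by
    constructor
    · rw [h0]; linarith
    · rw [h1]; simp [dist_nonneg]
  obtain ⟨t, ht01, ht⟩ := hiv h0mem
  have ht0 : (0:ℝ) ≤ t := ht01.1
  have ht1 : t ≤ 1 := ht01.2
  have heq : dist (f t) pi = dist (f t) pj := by linarith [sub_eq_zero.mp ht]
  have hxj : dist (f t) pj = (1 - t) * dist c pj := by
    rw [dist_eq_norm, dist_eq_norm]
    have h2 : f t - pj = (1 - t) • (c - pj) := by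
      simp only [hf]; module
    rw [h2, norm_smul, Real.norm_eq_abs, abs_of_nonneg (by linarith)]
  have hcx : dist c (f t) = t * dist c pj := by
    rw [dist_eq_norm, dist_eq_norm]
    have h2 : c - f t = t • (c - pj) := by
      simp only [hf]; module
    rw [h2, norm_smul, Real.norm_eq_abs, abs_of_nonneg ht0]
  have hkey : ∀ s ∈ S, dist (f t) pj ≤ dist (f t) s := by
    intro s hs
    by_cases hsi : s = pi
    · rw [hsi, ← heq]
    · have hcs : dist c pj ≤ dist c s := by
        by_cases hsj : s = pj
        · rw [hsj]
        · exact hsecond s hs hsi hsj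
      have htri : dist c s ≤ dist c (f t) + dist (f t) s := dist_triangle c (f t) s
      have hcpj : dist c pj ≤ dist c (f t) + dist (f t) s := le_trans hcs htri
      rw [hxj]
      rw [hcx] at hcpj
      nlinarith [dist_nonneg (x := c) (y := pj)]
  have hseg : f t ∈ segment ℝ c pj :=
    ⟨1 - t, t, by linarith, ht0, by ring, rfl⟩
  refine ⟨⟨f t, hseg, heq, hkey⟩, f t, ?_, ?_⟩
  · intro s hs; rw [heq]; exact hkey s hs
  · exact hkey
end
end

section
/- Let S be a finite set of pairwise distinct points in ℝ^d and q ∈ ℝ^d a point whose distances to the points of S are pairwise distinct. For 1 ≤ j < |S|, let s_1, …, s_{j+1} be the j+1 points of S closest to q, ordered by increasing distance to q. Then there exist m ∈ {1, …, j} and a point x on the line segment from q to s_{j+1} such that dist(x, s_{j+1}) = dist(x, s_m) ≤ dist(x, s) for all s ∈ S; in particular Cell(s_{j+1}; S) ∩ Cell(s_m; S) ≠ ∅, i.e., the (j+1)-th nearest neighbor of q is Voronoi-adjacent in S to one of the j nearer neighbors. -/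
open Set

noncomputable section

/-- the (j+1)-th nearest neighbor of `q` in a finite set `S`
is Voronoi-adjacent in `S` to one of the `j` nearer neighbors: some point `x`
on the segment from `q` to it is equidistant from both and at least as close
to them as to every site of `S`. -/
theorem stmt8
    {d : ℕ} (hd : 1 ≤ d) (S : Set (E d)) (hS : S.Finite)
    (q : E d) (hq : ∀ s ∈ S, ∀ t ∈ S, dist q s = dist q t → s = t)
    (j : ℕ) (hj1 : 1 ≤ j) (hj : j < S.ncard)
    (s : Fin (j + 1) → E d) (hinj : Function.Injective s)
    (hrange : ∀ a, s a ∈ S)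
    (hord : StrictMono fun a => dist q (s a))
    (hclosest : ∀ t ∈ S, (∀ a, s a ≠ t) → ∀ a, dist q (s a) < dist q t) :
    ∃ m : Fin (j + 1), (m : ℕ) < j ∧
      (∃ x ∈ segment ℝ q (s (Fin.last j)),
        dist x (s (Fin.last j)) = dist x (s m) ∧
        ∀ t ∈ S, dist x (s (Fin.last j)) ≤ dist x t) ∧
      (cell (s (Fin.last j)) S ∩ cell (s m) S).Nonempty := by
  set p := s (Fin.last j) with hpdef
  set x : ℝ → E d := fun t => q + t • (p - q) with hxdef
  have hxcont : Continuous x := by continuity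
  have hxseg : ∀ t ∈ Icc (0:ℝ) 1, x t ∈ segment ℝ q p := by
    intro t ht
    rw [segment_eq_image']
    exact ⟨t, ht, rfl⟩
  -- distance computations
  have hd1 : ∀ t : ℝ, dist q (x t) = |t| * dist q p := by
    intro t
    rw [dist_eq_norm, dist_eq_norm]
    have : q - x t = t • (q - p) := by show q - (q + t • (p - q)) = _; module
    rw [this, norm_smul]
    simp
  have hd2 : ∀ t : ℝ, dist (x t) p = |1 - t| * dist q p := by
    intro t
    rw [dist_eq_norm, dist_eq_norm]
    have : x t - p = (1 - t) • (q - p) := by show (q + t • (p - q)) - p = _; module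
    rw [this, norm_smul]
    simp
  have hdsum : ∀ t ∈ Icc (0:ℝ) 1, dist q (x t) + dist (x t) p = dist q p := by
    intro t ht
    rw [hd1, hd2, abs_of_nonneg ht.1, abs_of_nonneg (by linarith [ht.2])]
    ring
  set T : Set ℝ := {t ∈ Icc (0:ℝ) 1 | ∀ u ∈ S, dist (x t) p ≤ dist (x t) u} with hTdef
  have hTeq : T = Icc 0 1 ∩ ⋂ u ∈ S, {t | dist (x t) p ≤ dist (x t) u} := by
    ext t; simp [hTdef]
  have hTclosed : IsClosed T := by
    rw [hTeq]
    exact isClosed_Icc.inter (isClosed_biInter fun u _ =>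
      isClosed_le (hxcont.dist continuous_const) (hxcont.dist continuous_const))
  have hTsub : T ⊆ Icc 0 1 := fun t ht => ht.1
  have hTcompact : IsCompact T := isCompact_Icc.of_isClosed_subset hTclosed hTsub
  have h1T : (1:ℝ) ∈ T := by
    refine ⟨⟨zero_le_one, le_refl 1⟩, fun u hu => ?_⟩
    have hx1 : x 1 = p := by simp [hxdef]
    rw [hx1, dist_self]
    exact dist_nonneg
  set t0 := sInf T with ht0def
  have ht0 : t0 ∈ T := hTcompact.sInf_mem ⟨1, h1T⟩
  have h0notT : (0:ℝ) ∉ T := by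
    intro h0
    have hx0 : x 0 = q := by simp [hxdef]
    have h1 : dist (x 0) p ≤ dist (x 0) (s 0) := h0.2 (s 0) (hrange 0)
    have h2 : dist q (s 0) < dist q p := by
      have : (0 : Fin (j+1)) < Fin.last j := by
        rw [Fin.lt_def]; simp [Fin.last]; omega
      exact hord this
    rw [hx0] at h1
    linarith
  have ht0pos : 0 < t0 := by
    rcases lt_or_eq_of_le ht0.1.1 with h | h
    · exact h
    · exact absurd (h ▸ ht0) h0notT
  -- main claim: equality with another site
  have hmain : ∃ u ∈ S, u ≠ p ∧ dist (x t0) p = dist (x t0) u := by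
    by_contra hcon
    push_neg at hcon
    have hstrict : ∀ u ∈ S, u ≠ p → dist (x t0) p < dist (x t0) u := by
      intro u hu hne
      exact lt_of_le_of_ne (ht0.2 u hu) (hcon u hu hne)
    set U : Set ℝ := ⋂ u ∈ (S \ {p}), {t | dist (x t) p < dist (x t) u} with hUdef
    have hUopen : IsOpen U :=
      (hS.subset diff_subset).isOpen_biInter fun u _ =>
        isOpen_lt (hxcont.dist continuous_const) (hxcont.dist continuous_const)
    have ht0U : t0 ∈ U := by
      simp only [hUdef, mem_iInter]
      intro u hu
      exact hstrict u hu.1 hu.2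
    obtain ⟨ε, hε, hball⟩ := Metric.isOpen_iff.1 hUopen t0 ht0U
    set t1 := max 0 (t0 - ε/2) with ht1def
    have ht1lt : t1 < t0 := max_lt ht0pos (by linarith)
    have ht1ball : t1 ∈ Metric.ball t0 ε := by
      rw [Metric.mem_ball, Real.dist_eq, abs_sub_lt_iff]
      constructor
      · linarith
      · have : t0 - ε/2 ≤ t1 := le_max_right _ _
        linarith
    have ht1T : t1 ∈ T := by
      refine ⟨⟨le_max_left _ _, le_trans ht1lt.le ht0.1.2⟩, fun u hu => ?_⟩
      by_cases hup : u = p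
      · rw [hup]
      · have := hball ht1ball
        simp only [hUdef, mem_iInter] at this
        exact (this u ⟨hu, hup⟩).le
    have : t0 ≤ t1 := csInf_le ⟨0, fun t ht => ht.1.1⟩ ht1T
    linarith
  obtain ⟨u, hu, hune, hueq⟩ := hmain
  -- u is in the range of s
  have huq : dist q u ≤ dist q p := by
    calc dist q u ≤ dist q (x t0) + dist (x t0) u := dist_triangle _ _ _
      _ = dist q (x t0) + dist (x t0) p := by rw [hueq]
      _ = dist q p := hdsum t0 ht0.1
  have hex : ∃ a, s a = u := by
    by_contra hcon
    push_neg at hcon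
    have := hclosest u hu (fun a => hcon a) (Fin.last j)
    rw [← hpdef] at this
    linarith
  obtain ⟨a, ha⟩ := hex
  have hane : a ≠ Fin.last j := by
    intro h
    rw [h, ← hpdef] at ha
    exact hune ha.symm
  have haval : (a : ℕ) < j := by
    have h1 : (a : ℕ) < j + 1 := a.isLt
    by_contra hc
    have : (a : ℕ) = j := by omega
    exact hane (Fin.ext (by simp [this, Fin.last]))
  refine ⟨a, haval, ⟨x t0, hxseg t0 ht0.1, ?_, fun t ht => ht0.2 t ht⟩, ?_⟩
  · rw [ha, hueq]
  · exact ⟨x t0, fun t ht => ht0.2 t ht, fun t ht => by rw [ha, ← hueq]; exact ht0.2 t ht⟩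
end
end

section
/- Let P = (p_1, …, p_n) be a finite sequence of pairwise distinct points in ℝ^d and let 1 ≤ i < j ≤ n. If Cell(p_i; P_{1:j}) is a proper subset of Cell(p_i; P_{1:j−1}) (the insertion of p_j prunes the Voronoi cell of p_i), then there exists c ∈ ℝ^d with dist(c, p_i) = dist(c, p_j) ≤ dist(c, p_k) for all 1 ≤ k ≤ j; in particular Cell(p_i; P_{1:j}) ∩ Cell(p_j; P_{1:j}) ≠ ∅, i.e., p_i and p_j are Voronoi-adjacent in P_{1:j}. -/
open Set

noncomputable section

/-
Inserting `p_j` replaces the cell of `p_i` by its intersection with the closed half-space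
`{x | dist x p_i ≤ dist x p_j}`. A pruned point `x` therefore lies in the old cell on the far side
of the bisector of `p_i` and `p_j`, while `p_i` lies in the old cell on the near side. The old
cell is an intersection of half-spaces, hence convex, so the segment from `p_i` to `x` stays in it
and, by the intermediate value theorem, crosses the bisector at some `c`. Being equidistant from
`p_i` and `p_j` and in the old cell, `c` lies in both new cells.
-/

open scoped RealInnerProductSpace

section BisectorHalfSpace

variable {F : Type*} [NormedAddCommGroup F] [InnerProductSpace ℝ F]

theorem dist_le_dist_iff_inner_le (x q s : F) :
    dist x q ≤ dist x s ↔ ⟪s - q, x⟫ ≤ (‖s‖ ^ 2 - ‖q‖ ^ 2) / 2 := by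
  rw [← sq_le_sq₀ dist_nonneg dist_nonneg, dist_eq_norm, dist_eq_norm,
    norm_sub_sq_real, norm_sub_sq_real, inner_sub_left, real_inner_comm s x,
    real_inner_comm q x]
  constructor <;> intro h <;> linarith

theorem convex_setOf_dist_le_dist (q s : F) : Convex ℝ {x | dist x q ≤ dist x s} := by
  simp_rw [dist_le_dist_iff_inner_le]
  exact convex_halfSpace_le (innerₛₗ ℝ (s - q)).isLinear _

end BisectorHalfSpace

theorem Convex.exists_dist_eq_dist {F : Type*} [NormedAddCommGroup F] [NormedSpace ℝ F]
    {C : Set F} (hC : Convex ℝ C) {a b q r : F} (ha : a ∈ C) (hb : b ∈ C)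
    (haq : dist a q ≤ dist a r) (hbr : dist b r ≤ dist b q) :
    ∃ c ∈ C, dist c q = dist c r :=
  hC.isPreconnected.intermediate_value₂ ha hb (continuous_id.dist continuous_const).continuousOn
    (continuous_id.dist continuous_const).continuousOn haq hbr

section Voronoi

variable {d n : ℕ}

theorem convex_cell (q : E d) (S : Set (E d)) : Convex ℝ (cell q S) := by
  have : cell q S = ⋂ s ∈ S, {x | dist x q ≤ dist x s} := by ext; simp [cell]
  exact this ▸ convex_iInter₂ fun s _ => convex_setOf_dist_le_dist q s

theorem self_mem_cell (q : E d) (S : Set (E d)) : q ∈ cell q S := fun _ _ => by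
  simp only [dist_self, dist_nonneg]

theorem cell_insert (q s : E d) (S : Set (E d)) :
    cell q (insert s S) = {x | dist x q ≤ dist x s} ∩ cell q S := by
  ext; simp [cell]

theorem mem_cell_of_dist_eq {q q' c : E d} {S : Set (E d)} (hc : c ∈ cell q S)
    (hq : dist c q = dist c q') : c ∈ cell q' S := fun s hs => hq ▸ hc s hs

theorem pref_succ (p : Fin n → E d) (j : Fin n) :
    pref p ((j : ℕ) + 1) = insert (p j) (pref p j) := by
  ext x
  simp only [pref, mem_image, mem_ofPred_eq, mem_insert_iff, Nat.lt_succ_iff_lt_or_eq]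
  constructor
  · rintro ⟨k, hk | hk, rfl⟩
    · exact Or.inr ⟨k, hk, rfl⟩
    · exact Or.inl (congrArg p (Fin.ext hk))
  · rintro (rfl | ⟨k, hk, rfl⟩)
    exacts [⟨j, Or.inr rfl, rfl⟩, ⟨k, Or.inl hk, rfl⟩]

theorem mem_pref {p : Fin n → E d} {k : Fin n} {m : ℕ} (hk : (k : ℕ) < m) : p k ∈ pref p m :=
  ⟨k, hk, rfl⟩

end Voronoi

theorem stmt10_general
    {d n : ℕ}
    (p : Fin n → E d)
    (i j : Fin n)
    (hprune : cell (p i) (pref p ((j : ℕ) + 1)) ⊂ cell (p i) (pref p (j : ℕ))) :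
    (∃ c : E d, dist c (p i) = dist c (p j) ∧
      ∀ k : Fin n, k ≤ j → dist c (p i) ≤ dist c (p k)) ∧
    (cell (p i) (pref p ((j : ℕ) + 1)) ∩
      cell (p j) (pref p ((j : ℕ) + 1))).Nonempty := by
  rw [pref_succ, cell_insert] at hprune
  obtain ⟨x, hx_old, hx_new⟩ := exists_of_ssubset hprune
  have hxj : dist x (p j) ≤ dist x (p i) := le_of_lt <| not_le.mp fun h => hx_new ⟨h, hx_old⟩
  have hi : dist (p i) (p i) ≤ dist (p i) (p j) := by simp only [dist_self, dist_nonneg]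
  obtain ⟨c, hc_old, hc⟩ :=
    (convex_cell (p i) _).exists_dist_eq_dist (self_mem_cell _ _) hx_old hi hxj
  have hc_new : c ∈ cell (p i) (pref p ((j : ℕ) + 1)) := by
    rw [pref_succ, cell_insert]
    exact ⟨hc.le, hc_old⟩
  exact ⟨⟨c, hc, fun k hk => hc_new _ (mem_pref (Nat.lt_succ_of_le hk))⟩,
    c, hc_new, mem_cell_of_dist_eq hc_new hc⟩

/-- if the insertion of `p_j` prunes the Voronoi cell of `p_i`,
then there is a point `c` equidistant from `p_i` and `p_j` and at least as
close to them as to every `p_k` with `k ≤ j`; in particular `p_i` and `p_j`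
are Voronoi-adjacent in `P_{1:j}`. -/
theorem stmt10
    {d n : ℕ} (hd : 1 ≤ d)
    (p : Fin n → E d) (hp : Function.Injective p)
    (i j : Fin n) (hij : i < j)
    (hprune : cell (p i) (pref p ((j : ℕ) + 1)) ⊂ cell (p i) (pref p (j : ℕ))) :
    (∃ c : E d, dist c (p i) = dist c (p j) ∧
      ∀ k : Fin n, k ≤ j → dist c (p i) ≤ dist c (p k)) ∧
    (cell (p i) (pref p ((j : ℕ) + 1)) ∩
      cell (p j) (pref p ((j : ℕ) + 1))).Nonempty :=
  stmt10_general p i j hprune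
end
end

section
/- Let P be a finite set of pairwise distinct points in ℝ^d, let p_i ∈ P, and let p_x, p_y be two distinct points of P \ {p_i}. Suppose c ∈ ℝ^d satisfies dist(c, p_x) = dist(c, p_y) = r and dist(c, p_k) > r for every p_k ∈ P \ {p_i, p_x, p_y} (c lies on the Voronoi edge shared by p_x and p_y in the diagram of P \ {p_i}), and suppose Cell(p_x; P) ∩ Cell(p_y; P) = ∅ (p_x and p_y are not Voronoi-adjacent in P). Then dist(c, p_i) < r; consequently dist(c, p_i) < dist(c, s) for all s ∈ P \ {p_i}, i.e., c lies strictly inside Cell(p_i; P). -/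
open Set

noncomputable section

/-- if `c` lies on a Voronoi edge shared by `p_x` and `p_y`
after removal of `p_i`, while `p_x, p_y` were not Voronoi-adjacent in `P`,
then `c` lies strictly inside `Cell(p_i; P)`. -/
theorem stmt13
    {d : ℕ} (hd : 1 ≤ d) (P : Set (E d)) (hP : P.Finite)
    (pi : E d) (hpi : pi ∈ P)
    (px py : E d) (hpx : px ∈ P) (hpy : py ∈ P)
    (hxi : px ≠ pi) (hyi : py ≠ pi) (hxy : px ≠ py)
    (c : E d) (r : ℝ)
    (hcx : dist c px = r) (hcy : dist c py = r)
    (hfar : ∀ s ∈ P, s ≠ pi → s ≠ px → s ≠ py → r < dist c s)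
    (hnadj : cell px P ∩ cell py P = ∅) :
    dist c pi < r ∧ ∀ s ∈ P, s ≠ pi → dist c pi < dist c s := by
  have key : dist c pi < r := by
    by_contra h
    push_neg at h
    have hmem : ∀ s ∈ P, dist c s ≥ r := by
      intro s hs
      by_cases h1 : s = pi
      · subst h1; exact h
      by_cases h2 : s = px
      · subst h2; exact hcx.ge
      by_cases h3 : s = py
      · subst h3; exact hcy.ge
      · exact (hfar s hs h1 h2 h3).le
    have hc : c ∈ cell px P ∩ cell py P := by
      constructor
      · intro s hs; rw [hcx]; exact hmem s hs
      · intro s hs; rw [hcy]; exact hmem s hs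
    rw [hnadj] at hc
    exact hc
  refine ⟨key, fun s hs hsi => ?_⟩
  by_cases h2 : s = px
  · subst h2; rw [hcx]; exact key
  by_cases h3 : s = py
  · subst h3; rw [hcy]; exact key
  · exact key.trans (hfar s hs hsi h2 h3)
end
end

section
/- Let P be a finite set of pairwise distinct points in ℝ^d, let p_i ∈ P, and let p_x, p_y be two distinct points of P \ {p_i}. Suppose there exists c ∈ ℝ^d with dist(c, p_x) = dist(c, p_y) = r and dist(c, p_k) > r for every p_k ∈ P \ {p_i, p_x, p_y} (p_x and p_y become Voronoi-adjacent after removing p_i), and suppose Cell(p_x; P) ∩ Cell(p_y; P) = ∅ (they were not Voronoi-adjacent in P). Then both p_x and p_y are Voronoi neighbors of p_i in P: Cell(p_x; P) ∩ Cell(p_i; P) ≠ ∅ and Cell(p_y; P) ∩ Cell(p_i; P) ≠ ∅. -/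
open Set AffineMap

noncomputable section

lemma key {d : ℕ} (P : Set (E d)) (pi px py c : E d) (r : ℝ)
    (hcx : dist c px = r) (hcy : r ≤ dist c py)
    (hci : dist c pi < r)
    (hfar : ∀ s ∈ P, s ≠ pi → s ≠ px → s ≠ py → r < dist c s) :
    (cell px P ∩ cell pi P).Nonempty := by
  have hcont : Continuous fun t : ℝ =>
      dist (lineMap c px t) pi - dist (lineMap c px t) px := by
    have h1 : Continuous fun t : ℝ => lineMap c px t := lineMap_continuous
    exact (h1.dist continuous_const).sub (h1.dist continuous_const)
  have h0 : dist (lineMap c px (0:ℝ)) pi - dist (lineMap c px (0:ℝ)) px ≤ 0 := by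
    simp [hcx]; linarith
  have h1 : (0:ℝ) ≤ dist (lineMap c px (1:ℝ)) pi - dist (lineMap c px (1:ℝ)) px := by
    simp [dist_nonneg]
  obtain ⟨t, ht, hgt⟩ := intermediate_value_Icc (by norm_num : (0:ℝ) ≤ 1)
    (hcont.continuousOn) ⟨h0, h1⟩
  set z := lineMap c px t with hz
  have heq : dist z pi = dist z px := by have := hgt; simp only at this; linarith
  have ht0 : 0 ≤ t := ht.1
  have ht1 : t ≤ 1 := ht.2
  have hzc : dist c z = t * r := by
    rw [dist_comm, hz, dist_lineMap_left, Real.norm_eq_abs, abs_of_nonneg ht0, hcx]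
  have hzx : dist z px = (1 - t) * r := by
    rw [hz, dist_lineMap_right, Real.norm_eq_abs, abs_of_nonneg (by linarith), hcx]
  have hr0 : 0 ≤ r := hcx ▸ dist_nonneg
  have hbound : ∀ s : E d, r ≤ dist c s → dist z px ≤ dist z s := by
    intro s hs
    have := dist_triangle c s z  -- dist c s ≤ dist c z + dist z s? careful
    have h2 : dist c s ≤ dist c z + dist z s := by rw [dist_comm z s]; exact dist_triangle_right c s z
    rw [hzx]
    nlinarith [dist_nonneg (x := z) (y := s)]
  have hzmem : z ∈ cell px P := by
    intro s hs
    by_cases h1 : s = pi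
    · rw [h1, ← heq]
    by_cases h2 : s = px
    · rw [h2]
    by_cases h3 : s = py
    · exact h3 ▸ hbound py hcy
    · exact hbound s (le_of_lt (hfar s hs h1 h2 h3))
  refine ⟨z, hzmem, ?_⟩
  intro s hs
  rw [heq]
  exact hzmem s hs

/-- if `p_x` and `p_y` become Voronoi-adjacent after removing
`p_i` but were not adjacent in `P`, then both are Voronoi neighbors of `p_i`
in `P`. -/
theorem stmt14
    {d : ℕ} (hd : 1 ≤ d) (P : Set (E d)) (hP : P.Finite)
    (pi : E d) (hpi : pi ∈ P)
    (px py : E d) (hpx : px ∈ P) (hpy : py ∈ P)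
    (hxi : px ≠ pi) (hyi : py ≠ pi) (hxy : px ≠ py)
    (hedge : ∃ (c : E d) (r : ℝ), dist c px = r ∧ dist c py = r ∧
      ∀ s ∈ P, s ≠ pi → s ≠ px → s ≠ py → r < dist c s)
    (hnadj : cell px P ∩ cell py P = ∅) :
    (cell px P ∩ cell pi P).Nonempty ∧ (cell py P ∩ cell pi P).Nonempty := by
  obtain ⟨c, r, hcx, hcy, hfar⟩ := hedge
  have hci : dist c pi < r := by
    by_contra h
    push_neg at h
    have hc : ∀ s ∈ P, r ≤ dist c s := by
      intro s hs
      by_cases h1 : s = pi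
      · exact h1 ▸ h
      by_cases h2 : s = px
      · exact h2 ▸ hcx.ge
      by_cases h3 : s = py
      · exact h3 ▸ hcy.ge
      · exact (hfar s hs h1 h2 h3).le
    have hcmem : c ∈ cell px P ∩ cell py P := by
      constructor
      · intro s hs; rw [hcx]; exact hc s hs
      · intro s hs; rw [hcy]; exact hc s hs
    rw [hnadj] at hcmem
    exact hcmem
  constructor
  · exact key P pi px py c r hcx hcy.ge hci hfar
  · refine key P pi py px c r hcy hcx.ge hci ?_
    intro s hs h1 h2 h3
    exact hfar s hs h1 h3 h2
end
end
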